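/- Let n, c be positive integers with c > 1, and let F ⊆ 2^[n] contain no two distinct sets A, B with A ⊂ B and c·|A| ≤ |B|. Then |F| ≤ |{F ⊆ [n] : k+1 ≤ |F| ≤ c(k+1) - 1}| where k = ⌊n/(c+1)⌋. -/

import Mathlib

open Finset

private lemma irt_choose_mono {n : ℕ} : ∀ {a b : ℕ}, a ≤ b → 2*b ≤ n+1 →
    n.choose a ≤ n.choose b := by
  intro a b
  induction b with
  | zero =>
    intro h _
    have ha : a = 0 := Nat.le_zero.mp h
    subst ha; exact le_rfl
  | succ b ih =>
    intro hab hb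
    rcases Nat.eq_or_lt_of_le hab with rfl | h
    · exact le_rfl
    · refine (ih (by omega) (by omega)).trans ?_
      have hid := Nat.choose_succ_right_eq n b
      have hb1 : b + 1 ≤ n - b := by omega
      have h2 : n.choose b * (b+1) ≤ n.choose (b+1) * (b+1) := by
        calc n.choose b * (b+1) ≤ n.choose b * (n - b) := Nat.mul_le_mul_left _ hb1
          _ = n.choose (b+1) * (b+1) := hid.symm
      exact Nat.le_of_mul_le_mul_right h2 (by omega)

private lemma irt_two_mul_choose {n c x : ℕ} (hc : 2 ≤ c) (h : (c+1)*x + c ≤ n) :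
    2 * n.choose x ≤ n.choose (x+1) := by
  have hid := Nat.choose_succ_right_eq n x
  have e1 : (c+1)*x + c = c*(x+1) + x := by ring
  have e2 : 2*(x+1) ≤ c*(x+1) := Nat.mul_le_mul_right _ hc
  have h2 : 2*(x+1) ≤ n - x := by omega
  have h3 : 2 * n.choose x * (x+1) ≤ n.choose (x+1) * (x+1) := by
    calc 2 * n.choose x * (x+1) = n.choose x * (2*(x+1)) := by ring
      _ ≤ n.choose x * (n - x) := Nat.mul_le_mul_left _ h2
      _ = n.choose (x+1) * (x+1) := hid.symm
  exact Nat.le_of_mul_le_mul_right h3 (by omega)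

private lemma irt_sum_tail {n c k : ℕ} (hc : 2 ≤ c) (h1 : (c+1)*k ≤ n)
    (h2 : n < (c+1)*(k+1)) :
    ∑ j ∈ Icc (c*(k+1)) n, n.choose j ≤ n.choose (k+1) := by
  by_cases hcase : n < c*(k+1)
  · rw [Finset.Icc_eq_empty (by omega), Finset.sum_empty]
    exact Nat.zero_le _
  push_neg at hcase
  set r := n - c*(k+1) with hr
  have hrn : r + c*(k+1) = n := by omega
  have hrk : r ≤ k := by
    have e : (c+1)*(k+1) = k + c*(k+1) + 1 := by ring
    omega
  have key : ∀ x, x ≤ r → (c+1)*x + c ≤ n := by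
    intro x hx
    have e2 : c*(x+1) ≤ c*(k+1) := Nat.mul_le_mul_left _ (by omega)
    have e3 : (c+1)*x + c = c*(x+1) + x := by ring
    omega
  have hsum1 : ∑ j ∈ Icc (c*(k+1)) n, n.choose j = ∑ x ∈ range (r+1), n.choose x := by
    rw [← Finset.Ico_add_one_right_eq_Icc, Finset.sum_Ico_eq_sum_range]
    have hlen : n + 1 - c*(k+1) = r + 1 := by omega
    rw [hlen]
    rw [← Finset.sum_range_reflect]
    apply Finset.sum_congr rfl
    intro x hx
    rw [Finset.mem_range] at hx
    have hx' : x ≤ r := by omega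
    have : c*(k+1) + (r + 1 - 1 - x) = n - x := by omega
    rw [this, Nat.choose_symm (by omega)]
  rw [hsum1]
  have claimA : ∀ m, m ≤ r → ∑ x ∈ range (m+1), n.choose x ≤ 2 * n.choose m := by
    intro m
    induction m with
    | zero => intro _; simp
    | succ m ih =>
      intro hm
      rw [Finset.sum_range_succ]
      have hstep := irt_two_mul_choose hc (key m (by omega))
      have hih := ih (by omega)
      omega
  calc ∑ x ∈ range (r+1), n.choose x ≤ 2 * n.choose r := claimA r le_rfl
    _ ≤ n.choose (r+1) := irt_two_mul_choose hc (key r le_rfl)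
    _ ≤ n.choose (k+1) := by
        apply irt_choose_mono (by omega)
        rcases Nat.eq_zero_or_pos k with rfl | hk
        · have : c*1 ≤ n := by simpa using hcase
          omega
        · have h3 : 3*k ≤ (c+1)*k := Nat.mul_le_mul_right _ (by omega)
          omega

private lemma irt_card_superset_le {n : ℕ} (T : Finset (Fin n)) (j : ℕ) :
    ((univ : Finset (Finset (Fin n))).filter (fun B => T ⊆ B ∧ B.card = j)).card
      ≤ (n - T.card).choose (j - T.card) := by
  classical
  have h1 : ((Tᶜ).powersetCard (j - T.card)).card = (n - T.card).choose (j - T.card) := by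
    rw [Finset.card_powersetCard, Finset.card_compl, Fintype.card_fin]
  rw [← h1]
  apply Finset.card_le_card_of_injOn (fun B => B \ T)
  · intro B hB
    simp only [Finset.mem_coe] at hB ⊢
    rw [Finset.mem_filter] at hB
    obtain ⟨-, hTB, hBc⟩ := hB
    rw [Finset.mem_powersetCard]
    constructor
    · intro x hx
      rw [Finset.mem_compl]
      exact (Finset.mem_sdiff.mp hx).2
    · rw [Finset.card_sdiff_of_subset hTB, hBc]
  · intro B hB B' hB' h
    simp only [Finset.coe_filter, Set.mem_setOf_eq, Finset.mem_univ, true_and] at hB hB'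
    have h' : B \ T = B' \ T := h
    rw [← Finset.sdiff_union_of_subset hB.1, ← Finset.sdiff_union_of_subset hB'.1, h']

private lemma irt_card_superset_ge {n : ℕ} (S : Finset (Fin n)) (j : ℕ)
    (h1 : S.card ≤ j) (h2 : j ≤ n) :
    (n - S.card).choose (j - S.card) ≤
      ((univ : Finset (Finset (Fin n))).filter (fun T => S ⊆ T ∧ T.card = j)).card := by
  classical
  have hc : ((Sᶜ).powersetCard (j - S.card)).card = (n - S.card).choose (j - S.card) := by
    rw [Finset.card_powersetCard, Finset.card_compl, Fintype.card_fin]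
  rw [← hc]
  apply Finset.card_le_card_of_injOn (fun R => R ∪ S)
  · intro R hR
    simp only [Finset.mem_coe] at hR ⊢
    rw [Finset.mem_powersetCard] at hR
    obtain ⟨hRS, hRc⟩ := hR
    have hdisj : Disjoint R S :=
      Finset.disjoint_left.mpr fun x hxR hxS => (Finset.mem_compl.mp (hRS hxR)) hxS
    rw [Finset.mem_filter]
    refine ⟨Finset.mem_univ _, Finset.subset_union_right, ?_⟩
    rw [Finset.card_union_of_disjoint hdisj, hRc]
    omega
  · intro R hR R' hR' h
    simp only [Finset.mem_coe, Finset.mem_powersetCard] at hR hR'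
    have key : ∀ R₀ : Finset (Fin n), R₀ ⊆ Sᶜ → (R₀ ∪ S) \ S = R₀ := by
      intro R₀ hR₀
      rw [Finset.union_sdiff_right]
      exact Finset.sdiff_eq_self_of_disjoint
        (Finset.disjoint_left.mpr fun x hxR hxS => (Finset.mem_compl.mp (hR₀ hxR)) hxS)
    have h' : R ∪ S = R' ∪ S := h
    rw [← key R hR.1, ← key R' hR'.1, h']

private lemma irt_up_matching {n c k : ℕ} (hc : 2 ≤ c) (hkn : (c+1)*k ≤ n) :
    ∃ ψ : Finset (Fin n) → Finset (Fin n),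
      (∀ A, 1 ≤ A.card → A.card ≤ k → A ⊆ ψ A ∧ (ψ A).card = c * A.card) ∧
      (∀ A B, 1 ≤ A.card → A.card ≤ k → 1 ≤ B.card → B.card ≤ k →
        ψ A = ψ B → A = B) := by
  classical
  set t : {A : Finset (Fin n) // 1 ≤ A.card ∧ A.card ≤ k} → Finset (Finset (Fin n)) :=
    fun A => (univ : Finset (Finset (Fin n))).filter
      (fun T => A.val ⊆ T ∧ T.card = c * A.val.card) with ht
  have hall : ∀ s : Finset {A : Finset (Fin n) // 1 ≤ A.card ∧ A.card ≤ k},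
      s.card ≤ (s.biUnion t).card := by
    intro s
    set N := s.biUnion t with hN
    have hfib : s.card = ∑ i ∈ Icc 1 k, (s.filter (fun A => A.val.card = i)).card :=
      Finset.card_eq_sum_card_fiberwise (fun A _ => by rw [Finset.mem_coe, Finset.mem_Icc]; exact A.2)
    have hper : ∀ i ∈ Icc 1 k,
        (s.filter (fun A => A.val.card = i)).card
          ≤ (N.filter (fun T => T.card = c*i)).card := by
      intro i hi
      rw [Finset.mem_Icc] at hi
      set si := s.filter (fun A => A.val.card = i) with hsi
      set Ni := N.filter (fun T => T.card = c*i) with hNi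
      have hin : c*i + i ≤ n := by
        have e1 : (c+1)*i ≤ (c+1)*k := Nat.mul_le_mul_left _ hi.2
        have e2 : (c+1)*i = c*i + i := by ring
        omega
      have hii : i ≤ c*i := Nat.le_mul_of_pos_left i (by omega)
      have hX : 0 < (n - i).choose (c*i - i) := Nat.choose_pos (by omega)
      have e1 : ∀ A ∈ si, (n - i).choose (c*i - i) ≤ (Ni.filter (fun T => A.val ⊆ T)).card := by
        intro A hA
        rw [hsi, Finset.mem_filter] at hA
        obtain ⟨hAs, hAc⟩ := hA
        have hsub : ((univ : Finset (Finset (Fin n))).filter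
            (fun T => A.val ⊆ T ∧ T.card = c*i)) ⊆ Ni.filter (fun T => A.val ⊆ T) := by
          intro T hT
          rw [Finset.mem_filter] at hT
          rw [Finset.mem_filter]
          refine ⟨?_, hT.2.1⟩
          rw [hNi, Finset.mem_filter]
          refine ⟨?_, hT.2.2⟩
          rw [hN, Finset.mem_biUnion]
          refine ⟨A, hAs, ?_⟩
          rw [ht]
          simp only [Finset.mem_filter]
          exact ⟨Finset.mem_univ _, hT.2.1, by rw [hT.2.2, hAc]⟩
        have hge := irt_card_superset_ge A.val (c*i) (by rw [hAc]; exact hii) (by omega)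
        rw [hAc] at hge
        exact le_trans hge (Finset.card_le_card hsub)
      have e2 : ∑ A ∈ si, (Ni.filter (fun T => A.val ⊆ T)).card
          = ∑ T ∈ Ni, (si.filter (fun A => A.val ⊆ T)).card := by
        simp_rw [Finset.card_filter]
        exact Finset.sum_comm
      have e3 : ∀ T ∈ Ni, (si.filter (fun A => A.val ⊆ T)).card ≤ (c*i).choose i := by
        intro T hT
        rw [hNi, Finset.mem_filter] at hT
        have hTc : T.card = c*i := hT.2
        have hle : (si.filter (fun A => A.val ⊆ T)).card ≤ (T.powersetCard i).card := by
          apply Finset.card_le_card_of_injOn (fun A => A.val)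
          · intro A hA
            simp only [Finset.mem_coe] at hA ⊢
            rw [Finset.mem_filter, hsi, Finset.mem_filter] at hA
            rw [Finset.mem_powersetCard]
            exact ⟨hA.2, hA.1.2⟩
          · intro A _ B _ h
            exact Subtype.ext h
        rwa [Finset.card_powersetCard, hTc] at hle
      have hmono : (c*i).choose i ≤ (n - i).choose (c*i - i) := by
        rw [← Nat.choose_symm hii]
        exact Nat.choose_le_choose _ (by omega)
      have hchain : si.card * ((n-i).choose (c*i-i)) ≤ Ni.card * ((n-i).choose (c*i-i)) := by
        calc si.card * ((n-i).choose (c*i-i)) = ∑ _A ∈ si, (n-i).choose (c*i-i) := by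
              rw [Finset.sum_const, smul_eq_mul]
          _ ≤ ∑ A ∈ si, (Ni.filter (fun T => A.val ⊆ T)).card := Finset.sum_le_sum e1
          _ = ∑ T ∈ Ni, (si.filter (fun A => A.val ⊆ T)).card := e2
          _ ≤ ∑ _T ∈ Ni, (c*i).choose i := Finset.sum_le_sum e3
          _ = Ni.card * ((c*i).choose i) := by rw [Finset.sum_const, smul_eq_mul]
          _ ≤ Ni.card * ((n-i).choose (c*i-i)) := Nat.mul_le_mul_left _ hmono
      exact Nat.le_of_mul_le_mul_right hchain hX
    have hdisj : ∀ i₁ ∈ Icc 1 k, ∀ i₂ ∈ Icc 1 k, i₁ ≠ i₂ →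
        Disjoint (N.filter (fun T => T.card = c*i₁)) (N.filter (fun T => T.card = c*i₂)) := by
      intro i₁ _ i₂ _ hne
      apply Finset.disjoint_left.mpr
      intro T h₁ h₂
      rw [Finset.mem_filter] at h₁ h₂
      exact hne (Nat.eq_of_mul_eq_mul_left (by omega) (h₁.2 ▸ h₂.2))
    rw [hfib]
    calc ∑ i ∈ Icc 1 k, (s.filter (fun A => A.val.card = i)).card
        ≤ ∑ i ∈ Icc 1 k, (N.filter (fun T => T.card = c*i)).card := Finset.sum_le_sum hper
      _ = ((Icc 1 k).biUnion (fun i => N.filter (fun T => T.card = c*i))).card :=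
          (Finset.card_biUnion hdisj).symm
      _ ≤ N.card := Finset.card_le_card (Finset.biUnion_subset.mpr
          (fun i _ => Finset.filter_subset _ _))
  obtain ⟨f, hfinj, hfm⟩ := (Finset.all_card_le_biUnion_card_iff_exists_injective t).mp hall
  refine ⟨fun A => if h : 1 ≤ A.card ∧ A.card ≤ k then f ⟨A, h⟩ else A, ?_, ?_⟩
  · intro A h1 h2
    have hm := hfm ⟨A, ⟨h1, h2⟩⟩
    rw [ht] at hm
    simp only [Finset.mem_filter] at hm
    have hd : (fun A => if h : 1 ≤ A.card ∧ A.card ≤ k then f ⟨A, h⟩ else A) A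
        = f ⟨A, ⟨h1, h2⟩⟩ := dif_pos ⟨h1, h2⟩
    rw [hd]
    exact ⟨hm.2.1, hm.2.2⟩
  · intro A B hA1 hA2 hB1 hB2 h
    have hdA : (fun A => if h : 1 ≤ A.card ∧ A.card ≤ k then f ⟨A, h⟩ else A) A
        = f ⟨A, ⟨hA1, hA2⟩⟩ := dif_pos ⟨hA1, hA2⟩
    have hdB : (fun A => if h : 1 ≤ A.card ∧ A.card ≤ k then f ⟨A, h⟩ else A) B
        = f ⟨B, ⟨hB1, hB2⟩⟩ := dif_pos ⟨hB1, hB2⟩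
    rw [hdA, hdB] at h
    have := hfinj h
    exact congrArg Subtype.val this

private lemma irt_down_matching {n K L : ℕ} (hKL : K ≤ L) (hKn : K ≤ n)
    (hsum : ∑ j ∈ Icc L n, n.choose j ≤ n.choose K) :
    ∃ φ : Finset (Fin n) → Finset (Fin n),
      (∀ B : Finset (Fin n), L ≤ B.card → φ B ⊆ B ∧ (φ B).card = K) ∧
      (∀ B B' : Finset (Fin n), L ≤ B.card → L ≤ B'.card → φ B = φ B' → B = B') := by
  classical
  set t : {B : Finset (Fin n) // L ≤ B.card} → Finset (Finset (Fin n)) :=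
    fun B => B.val.powersetCard K with ht
  have hall : ∀ s : Finset {B : Finset (Fin n) // L ≤ B.card},
      s.card ≤ (s.biUnion t).card := by
    intro s
    set N := s.biUnion t with hN
    have hcardN : ∀ T ∈ N, T.card = K := by
      intro T hT
      rw [hN, Finset.mem_biUnion] at hT
      obtain ⟨B, _, hTB⟩ := hT
      rw [ht] at hTB
      exact (Finset.mem_powersetCard.mp hTB).2
    have hcardn : ∀ B : {B : Finset (Fin n) // L ≤ B.card}, B.val.card ≤ n := by
      intro B
      have := Finset.card_le_univ B.val
      simpa using this
    have hfib : s.card = ∑ j ∈ Icc L n, (s.filter (fun B => B.val.card = j)).card :=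
      Finset.card_eq_sum_card_fiberwise (fun B _ => by
        rw [Finset.mem_coe, Finset.mem_Icc]; exact ⟨B.2, hcardn B⟩)
    have hper : ∀ j ∈ Icc L n, (s.filter (fun B => B.val.card = j)).card * n.choose K
        ≤ N.card * n.choose j := by
      intro j hj
      rw [Finset.mem_Icc] at hj
      have hKj : K ≤ j := le_trans hKL hj.1
      set sj := s.filter (fun B => B.val.card = j) with hsj
      have hX : 0 < (n - K).choose (j - K) := Nat.choose_pos (by omega)
      have e1 : ∀ B ∈ sj, j.choose K ≤ (N.filter (fun T => T ⊆ B.val)).card := by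
        intro B hB
        rw [hsj, Finset.mem_filter] at hB
        have hsub : B.val.powersetCard K ⊆ N.filter (fun T => T ⊆ B.val) := by
          intro T hT
          rw [Finset.mem_filter]
          refine ⟨?_, (Finset.mem_powersetCard.mp hT).1⟩
          rw [hN, Finset.mem_biUnion]
          exact ⟨B, hB.1, by rw [ht]; exact hT⟩
        have hc := Finset.card_le_card hsub
        rwa [Finset.card_powersetCard, hB.2] at hc
      have e2 : ∑ B ∈ sj, (N.filter (fun T => T ⊆ B.val)).card
          = ∑ T ∈ N, (sj.filter (fun B => T ⊆ B.val)).card := by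
        simp_rw [Finset.card_filter]
        exact Finset.sum_comm
      have e3 : ∀ T ∈ N, (sj.filter (fun B => T ⊆ B.val)).card ≤ (n - K).choose (j - K) := by
        intro T hT
        have hTK := hcardN T hT
        have hle : (sj.filter (fun B => T ⊆ B.val)).card ≤
            ((univ : Finset (Finset (Fin n))).filter (fun B => T ⊆ B ∧ B.card = j)).card := by
          apply Finset.card_le_card_of_injOn (fun B => B.val)
          · intro B hB
            simp only [Finset.mem_coe] at hB ⊢
            rw [Finset.mem_filter, hsj, Finset.mem_filter] at hB
            rw [Finset.mem_filter]
            exact ⟨Finset.mem_univ _, hB.2, hB.1.2⟩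
          · intro a _ b _ hab
            exact Subtype.ext hab
        refine le_trans hle ?_
        have := irt_card_superset_le T j
        rwa [hTK] at this
      have step1 : sj.card * (j.choose K) ≤ N.card * ((n-K).choose (j-K)) := by
        calc sj.card * j.choose K = ∑ _B ∈ sj, j.choose K := by
              rw [Finset.sum_const, smul_eq_mul]
          _ ≤ ∑ B ∈ sj, (N.filter (fun T => T ⊆ B.val)).card := Finset.sum_le_sum e1
          _ = ∑ T ∈ N, (sj.filter (fun B => T ⊆ B.val)).card := e2
          _ ≤ ∑ _T ∈ N, (n-K).choose (j-K) := Finset.sum_le_sum e3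
          _ = N.card * ((n-K).choose (j-K)) := by rw [Finset.sum_const, smul_eq_mul]
      have hid : n.choose j * j.choose K = n.choose K * ((n-K).choose (j-K)) :=
        Nat.choose_mul (n := n) hKj
      have final : sj.card * n.choose K * ((n-K).choose (j-K))
          ≤ N.card * n.choose j * ((n-K).choose (j-K)) := by
        calc sj.card * n.choose K * ((n-K).choose (j-K))
            = sj.card * (n.choose K * ((n-K).choose (j-K))) := by ring
          _ = sj.card * (n.choose j * j.choose K) := by rw [hid]
          _ = n.choose j * (sj.card * j.choose K) := by ring
          _ ≤ n.choose j * (N.card * ((n-K).choose (j-K))) := Nat.mul_le_mul_left _ step1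
          _ = N.card * n.choose j * ((n-K).choose (j-K)) := by ring
      exact Nat.le_of_mul_le_mul_right final hX
    have hKpos : 0 < n.choose K := Nat.choose_pos hKn
    have hfin : s.card * n.choose K ≤ N.card * n.choose K := by
      calc s.card * n.choose K
          = ∑ j ∈ Icc L n, (s.filter (fun B => B.val.card = j)).card * n.choose K := by
            rw [hfib, Finset.sum_mul]
        _ ≤ ∑ j ∈ Icc L n, N.card * n.choose j := Finset.sum_le_sum hper
        _ = N.card * ∑ j ∈ Icc L n, n.choose j := by rw [Finset.mul_sum]
        _ ≤ N.card * n.choose K := Nat.mul_le_mul_left _ hsum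
    exact Nat.le_of_mul_le_mul_right hfin hKpos
  obtain ⟨f, hfinj, hfm⟩ := (Finset.all_card_le_biUnion_card_iff_exists_injective t).mp hall
  refine ⟨fun B => if h : L ≤ B.card then f ⟨B, h⟩ else B, ?_, ?_⟩
  · intro B hB
    have hm := hfm ⟨B, hB⟩
    rw [ht] at hm
    rw [Finset.mem_powersetCard] at hm
    have hd : (fun B => if h : L ≤ B.card then f ⟨B, h⟩ else B) B
        = f ⟨B, hB⟩ := dif_pos hB
    rw [hd]
    exact hm
  · intro B B' hB hB' h
    have hdB : (fun B => if h : L ≤ B.card then f ⟨B, h⟩ else B) B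
        = f ⟨B, hB⟩ := dif_pos hB
    have hdB' : (fun B => if h : L ≤ B.card then f ⟨B, h⟩ else B) B'
        = f ⟨B', hB'⟩ := dif_pos hB'
    rw [hdB, hdB'] at h
    exact congrArg Subtype.val (hfinj h)

/-- If `F ⊆ 2^[n]` contains no two distinct sets `A ⊂ B` with `c·|A| ≤ |B|`
(`c > 1` an integer), then `|F|` is at most the number of subsets of `[n]` whose
size lies in `[k+1, c(k+1)-1]`, where `k = ⌊n/(c+1)⌋`. -/
theorem integer_ratio_theorem (n c : ℕ) (hn : 0 < n) (hc : 1 < c)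
    (F : Finset (Finset (Fin n)))
    (hF : ∀ A ∈ F, ∀ B ∈ F, A ⊂ B → ¬ (c * A.card ≤ B.card)) :
    F.card ≤ ((Finset.univ : Finset (Finset (Fin n))).filter
      (fun S => n / (c + 1) + 1 ≤ S.card ∧ S.card ≤ c * (n / (c + 1) + 1) - 1)).card := by
  classical
  set k := n / (c + 1) with hkdef
  set G := ((Finset.univ : Finset (Finset (Fin n))).filter
      (fun S => k + 1 ≤ S.card ∧ S.card ≤ c * (k + 1) - 1)) with hGdef
  have hc2 : 2 ≤ c := hc
  have hdiv1 : (c+1)*k ≤ n := by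
    rw [hkdef, mul_comm]
    exact Nat.div_mul_le_self n (c+1)
  have hdiv2 : n < (c+1)*(k+1) := by
    have hdm := Nat.div_add_mod n (c+1)
    have hmod : n % (c+1) < c+1 := Nat.mod_lt n (by omega)
    have he : (c+1)*(k+1) = (c+1)*k + (c+1) := by ring
    rw [hkdef] at *
    omega
  have hkn : k + 1 ≤ n := by
    have := Nat.div_lt_self hn (show 1 < c + 1 by omega)
    rw [hkdef]
    omega
  have h2k : 2*(k+1) ≤ c*(k+1) := Nat.mul_le_mul_right _ hc2
  have hG1 : k + 1 ≤ c*(k+1) - 1 := by omega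
  have hkck : k < c*(k+1) := by omega
  -- G is nonempty
  have hGne : 0 < G.card := by
    obtain ⟨S, _, hScard⟩ := Finset.exists_subset_card_eq
      (show k+1 ≤ (univ : Finset (Fin n)).card by simpa using hkn)
    apply Finset.card_pos.mpr
    exact ⟨S, by rw [hGdef, Finset.mem_filter]; exact ⟨Finset.mem_univ _, by omega, by omega⟩⟩
  by_cases hem : ∅ ∈ F
  · have hFsub : F ⊆ {∅} := by
      intro A hA
      rw [Finset.mem_singleton]
      by_contra hne
      have hss : ∅ ⊂ A := Finset.empty_ssubset.mpr (Finset.nonempty_iff_ne_empty.mpr hne)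
      exact hF ∅ hem A hA hss (by simp)
    calc F.card ≤ ({∅} : Finset (Finset (Fin n))).card := Finset.card_le_card hFsub
      _ = 1 := Finset.card_singleton _
      _ ≤ G.card := hGne
  -- main case : ∅ ∉ F
  obtain ⟨ψ, hψ, hψinj⟩ := irt_up_matching (n := n) hc2 hdiv1
  obtain ⟨φ, hφ, hφinj⟩ := irt_down_matching (n := n) (K := k+1) (L := c*(k+1))
    (by omega) hkn (irt_sum_tail hc2 hdiv1 hdiv2)
  -- existence of good iterate
  have hEx : ∀ A : Finset (Fin n), 1 ≤ A.card → ∃ m, k + 1 ≤ (ψ^[m] A).card := by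
    have H : ∀ d (A : Finset (Fin n)), 1 ≤ A.card → k + 1 ≤ A.card + d →
        ∃ m, k + 1 ≤ (ψ^[m] A).card := by
      intro d
      induction d with
      | zero =>
        intro A h1 h2
        exact ⟨0, by simpa using h2⟩
      | succ d ih =>
        intro A h1 h2
        by_cases hA : k + 1 ≤ A.card
        · exact ⟨0, by simpa using hA⟩
        · push_neg at hA
          obtain ⟨hsub, hcard⟩ := hψ A h1 (by omega)
          have hcc : 2 * A.card ≤ c * A.card := Nat.mul_le_mul_right _ hc2
          obtain ⟨m, hm⟩ := ih (ψ A) (by omega) (by omega)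
          exact ⟨m + 1, by rwa [Function.iterate_succ_apply]⟩
    intro A h1
    exact H (k+1) A h1 (by omega)
  -- iterate facts
  have hiter : ∀ (A : Finset (Fin n)), 1 ≤ A.card →
      ∀ (hex : ∃ m, k + 1 ≤ (ψ^[m] A).card), ∀ l, l ≤ Nat.find hex →
      1 ≤ (ψ^[l] A).card ∧ A ⊆ ψ^[l] A ∧ A.card ≤ (ψ^[l] A).card := by
    intro A h1 hex l
    induction l with
    | zero =>
      intro _
      simp only [Function.iterate_zero_apply]
      exact ⟨h1, subset_rfl, le_rfl⟩
    | succ l ih =>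
      intro hl
      obtain ⟨ha, hb, hcc⟩ := ih (by omega)
      have hsmall : (ψ^[l] A).card ≤ k := by
        by_contra hcon
        push_neg at hcon
        exact Nat.find_min hex (show l < Nat.find hex by omega) (by omega)
      obtain ⟨hs1, hs2⟩ := hψ (ψ^[l] A) ha hsmall
      rw [Function.iterate_succ_apply']
      refine ⟨?_, hb.trans hs1, ?_⟩
      · rw [hs2]
        exact Nat.mul_pos (by omega) ha
      · rw [hs2]
        calc A.card ≤ (ψ^[l] A).card := hcc
          _ ≤ c * (ψ^[l] A).card := Nat.le_mul_of_pos_left _ (by omega)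
  have hsm_it : ∀ (A : Finset (Fin n)), 1 ≤ A.card →
      ∀ (hex : ∃ m, k + 1 ≤ (ψ^[m] A).card), ∀ l, l < Nat.find hex →
      1 ≤ (ψ^[l] A).card ∧ (ψ^[l] A).card ≤ k := by
    intro A h1 hex l hl
    refine ⟨(hiter A h1 hex l (by omega)).1, ?_⟩
    by_contra hcon
    push_neg at hcon
    exact Nat.find_min hex hl (by omega)
  -- Ψ : iterate to the first good level
  set Ψ : Finset (Fin n) → Finset (Fin n) :=
    fun A => if h : ∃ m, k + 1 ≤ (ψ^[m] A).card then ψ^[Nat.find h] A else A with hΨdef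
  have hΨeq : ∀ (A : Finset (Fin n)) (hex : ∃ m, k + 1 ≤ (ψ^[m] A).card),
      Ψ A = ψ^[Nat.find hex] A := by
    intro A hex
    rw [hΨdef]
    exact dif_pos hex
  have hΨgood : ∀ A : Finset (Fin n), k + 1 ≤ A.card → Ψ A = A := by
    intro A h
    have hex : ∃ m, k + 1 ≤ (ψ^[m] A).card := ⟨0, by simpa using h⟩
    rw [hΨeq A hex]
    have h0 : Nat.find hex = 0 := (Nat.find_eq_zero hex).mpr (by simpa using h)
    rw [h0]
    simp
  have hΨsmall : ∀ A : Finset (Fin n), 1 ≤ A.card → A.card ≤ k →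
      A ⊆ Ψ A ∧ k + 1 ≤ (Ψ A).card ∧ (Ψ A).card ≤ c*k ∧ c * A.card ≤ (Ψ A).card := by
    intro A h1 h2
    have hex := hEx A h1
    rw [hΨeq A hex]
    set m := Nat.find hex with hmdef
    have hm1 : 1 ≤ m := by
      rcases Nat.eq_zero_or_pos m with h0 | h
      · exfalso
        have hspec := Nat.find_spec hex
        rw [← hmdef, h0] at hspec
        simp at hspec
        omega
      · exact h
    obtain ⟨ha, hb, hcc⟩ := hiter A h1 hex (m-1) (by omega)
    have hsm : (ψ^[m-1] A).card ≤ k := (hsm_it A h1 hex (m-1) (by omega)).2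
    obtain ⟨hs1, hs2⟩ := hψ _ ha hsm
    have hstep : ψ^[m] A = ψ (ψ^[m-1] A) := by
      conv_lhs => rw [show m = (m-1) + 1 by omega]
      rw [Function.iterate_succ_apply']
    refine ⟨?_, ?_, ?_, ?_⟩
    · rw [hstep]; exact hb.trans hs1
    · exact Nat.find_spec hex
    · rw [hstep, hs2]
      exact Nat.mul_le_mul_left c hsm
    · rw [hstep, hs2]
      exact Nat.mul_le_mul_left c hcc
  -- cancellation
  have hcancel : ∀ b a (A B : Finset (Fin n)), b ≤ a →
      (∀ l, l < a → 1 ≤ (ψ^[l] A).card ∧ (ψ^[l] A).card ≤ k) →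
      (∀ l, l < b → 1 ≤ (ψ^[l] B).card ∧ (ψ^[l] B).card ≤ k) →
      ψ^[a] A = ψ^[b] B → ψ^[a-b] A = B := by
    intro b
    induction b with
    | zero =>
      intro a A B _ _ _ h
      simpa using h
    | succ b ih =>
      intro a A B hba hA hB h
      rw [Function.iterate_succ_apply] at h
      have hmid := ih a A (ψ B) (by omega) hA
        (fun l hl => by
          rw [← Function.iterate_succ_apply]
          exact hB (l+1) (by omega)) h
      have hab : a - b = (a - (b+1)) + 1 := by omega
      rw [hab, Function.iterate_succ_apply'] at hmid
      have hAsm := hA (a - (b+1)) (by omega)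
      have hBsm := hB 0 (by omega)
      simp only [Function.iterate_zero_apply] at hBsm
      exact hψinj _ _ hAsm.1 hAsm.2 hBsm.1 hBsm.2 hmid
  -- nonempty members
  have hne : ∀ A ∈ F, 1 ≤ A.card := by
    intro A hA
    rcases Nat.eq_zero_or_pos A.card with h0 | h
    · exfalso
      rw [Finset.card_eq_zero] at h0
      exact hem (h0 ▸ hA)
    · exact h
  -- the injection
  set Φ : Finset (Fin n) → Finset (Fin n) :=
    fun A => if c*(k+1) ≤ A.card then φ A else Ψ A with hΦdef
  have hΦlarge : ∀ A : Finset (Fin n), c*(k+1) ≤ A.card → Φ A = φ A := by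
    intro A h
    rw [hΦdef]
    exact if_pos h
  have hΦnotlarge : ∀ A : Finset (Fin n), A.card < c*(k+1) → Φ A = Ψ A := by
    intro A h
    rw [hΦdef]
    exact if_neg (by omega)
  rw [hGdef] at *
  apply Finset.card_le_card_of_injOn Φ
  · -- maps to G
    intro A hA
    have hA1 := hne A hA
    rw [Finset.mem_coe, Finset.mem_filter]
    refine ⟨Finset.mem_univ _, ?_⟩
    by_cases hlg : c*(k+1) ≤ A.card
    · rw [hΦlarge A hlg]
      obtain ⟨_, hcard⟩ := hφ A hlg
      rw [hcard]
      exact ⟨le_rfl, hG1⟩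
    · push_neg at hlg
      rw [hΦnotlarge A hlg]
      by_cases hgd : k + 1 ≤ A.card
      · rw [hΨgood A hgd]
        exact ⟨hgd, by omega⟩
      · push_neg at hgd
        obtain ⟨_, hb1, hb2, _⟩ := hΨsmall A hA1 (by omega)
        have hrel : c*(k+1) = c*k + c := by ring
        exact ⟨hb1, by omega⟩
  · -- injectivity on F
    intro A hA' B hB' hAB
    have hA : A ∈ F := hA'
    have hB : B ∈ F := hB'
    have hA1 := hne A hA
    have hB1 := hne B hB
    -- helper : large vs non-large impossible
    have hlgnl : ∀ X ∈ F, ∀ Y ∈ F, c*(k+1) ≤ X.card → Y.card < c*(k+1) →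
        Φ X = Φ Y → False := by
      intro X hX Y hY hlX hlY heq
      have hY1 := hne Y hY
      rw [hΦlarge X hlX, hΦnotlarge Y hlY] at heq
      obtain ⟨hφsub, hφcard⟩ := hφ X hlX
      by_cases hgd : k + 1 ≤ Y.card
      · -- Y good : Y = φ X
        rw [hΨgood Y hgd] at heq
        have hYX : Y ⊆ X := heq ▸ hφsub
        have hYcard : Y.card = k + 1 := by rw [← heq]; exact hφcard
        have hss : Y ⊂ X := by
          refine Finset.ssubset_iff_subset_ne.mpr ⟨hYX, ?_⟩
          intro hcon
          rw [hcon] at hYcard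
          omega
        exact hF Y hY X hX hss (by rw [hYcard]; omega)
      · push_neg at hgd
        obtain ⟨hsub, hg1, _, hg3⟩ := hΨsmall Y hY1 (by omega)
        have hYX : Y ⊆ X := by
          refine subset_trans hsub ?_
          rw [← heq]
          exact hφsub
        have hΨYcard : (Ψ Y).card = k + 1 := by rw [← heq]; exact hφcard
        have hss : Y ⊂ X := by
          refine Finset.ssubset_iff_subset_ne.mpr ⟨hYX, ?_⟩
          intro hcon
          rw [hcon] at hgd
          omega
        refine hF Y hY X hX hss ?_
        calc c * Y.card ≤ (Ψ Y).card := hg3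
          _ = k + 1 := hΨYcard
          _ ≤ X.card := by omega
    -- helper : good vs small impossible
    have hgdsm : ∀ X ∈ F, ∀ Y ∈ F, k + 1 ≤ X.card → X.card < c*(k+1) →
        Y.card ≤ k → Φ X = Φ Y → False := by
      intro X hX Y hY hgX1 hgX2 hsY heq
      have hY1 := hne Y hY
      rw [hΦnotlarge X (by omega), hΦnotlarge Y (by omega), hΨgood X hgX1] at heq
      obtain ⟨hsub, hg1, _, hg3⟩ := hΨsmall Y hY1 hsY
      have hYX : Y ⊆ X := by rw [heq]; exact hsub
      have hss : Y ⊂ X := Finset.ssubset_iff_subset_ne.mpr ⟨hYX, by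
        intro hcon
        rw [hcon] at hsY
        omega⟩
      refine hF Y hY X hX hss ?_
      calc c * Y.card ≤ (Ψ Y).card := hg3
        _ = X.card := by rw [heq]
    -- helper : small vs small, ordered by find value
    have hsmsm : ∀ X ∈ F, ∀ Y ∈ F, ∀ (h1X : 1 ≤ X.card) (hsX : X.card ≤ k)
        (h1Y : 1 ≤ Y.card) (hsY : Y.card ≤ k),
        Nat.find (hEx Y h1Y) ≤ Nat.find (hEx X h1X) → Φ X = Φ Y → X = Y := by
      intro X hX Y hY h1X hsX h1Y hsY hle heq
      rw [hΦnotlarge X (by omega), hΦnotlarge Y (by omega),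
        hΨeq X (hEx X h1X), hΨeq Y (hEx Y h1Y)] at heq
      set a := Nat.find (hEx X h1X) with hadef
      set b := Nat.find (hEx Y h1Y) with hbdef
      have hres := hcancel b a X Y hle (hsm_it X h1X (hEx X h1X)) (hsm_it Y h1Y (hEx Y h1Y)) heq
      rcases Nat.eq_or_lt_of_le hle with heqab | hltab
      · have : a - b = 0 := by omega
        rw [this] at hres
        simpa using hres
      · exfalso
        -- Y = ψ^[a-b] X with a-b ≥ 1
        have hd1 : 1 ≤ a - b := by omega
        obtain ⟨_, hsub, hcard⟩ := hiter X h1X (hEx X h1X) (a-b) (by omega)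
        have hstep : ψ^[a-b] X = ψ (ψ^[a-b-1] X) := by
          conv_lhs => rw [show a - b = (a-b-1) + 1 by omega]
          rw [Function.iterate_succ_apply']
        have hprev := hsm_it X h1X (hEx X h1X) (a-b-1) (by omega)
        obtain ⟨hp1, hp2⟩ := hψ _ hprev.1 hprev.2
        have hprevcard := (hiter X h1X (hEx X h1X) (a-b-1) (by omega)).2.2
        have hYcard : Y.card = c * (ψ^[a-b-1] X).card := by
          rw [← hres, hstep, hp2]
        have hccX : 2 * (ψ^[a-b-1] X).card ≤ c * (ψ^[a-b-1] X).card :=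
          Nat.mul_le_mul_right _ hc2
        have hXY : X ⊆ Y := by rw [← hres]; exact hsub
        have hss : X ⊂ Y := Finset.ssubset_iff_subset_ne.mpr ⟨hXY, by
          intro hcon
          rw [← hcon] at hYcard
          omega⟩
        refine hF X hX Y hY hss ?_
        rw [hYcard]
        exact Nat.mul_le_mul_left c hprevcard
    -- now the case analysis
    by_cases hlA : c*(k+1) ≤ A.card <;> by_cases hlB : c*(k+1) ≤ B.card
    · rw [hΦlarge A hlA, hΦlarge B hlB] at hAB
      exact hφinj A B hlA hlB hAB
    · exact absurd hAB (fun h => hlgnl A hA B hB hlA (by omega) h)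
    · exact absurd hAB (fun h => hlgnl B hB A hA hlB (by omega) h.symm)
    · push_neg at hlA hlB
      by_cases hgA : k + 1 ≤ A.card <;> by_cases hgB : k + 1 ≤ B.card
      · rw [hΦnotlarge A (by omega), hΦnotlarge B (by omega),
          hΨgood A hgA, hΨgood B hgB] at hAB
        exact hAB
      · exact absurd hAB (fun h => hgdsm A hA B hB hgA hlA (by omega) h)
      · exact absurd hAB (fun h => hgdsm B hB A hA hgB hlB (by omega) h.symm)
      · push_neg at hgA hgB
        rcases le_total (Nat.find (hEx B hB1)) (Nat.find (hEx A hA1)) with hle | hle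
        · exact hsmsm A hA B hB hA1 (by omega) hB1 (by omega) hle hAB
        · exact (hsmsm B hB A hA hB1 (by omega) hA1 (by omega) hle hAB.symm).symm
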